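/- Let a(x) = p·x + α and b(x) = q·x + β be affine functions on ℝ^d with p ≠ q, and let d(x) = a(x) - b(x). For a bounded measurable set Ω ⊆ ℝ^d and constants C, c > 0, the integral ∫_Ω exp(-c·τ·|d(x)|) dx is at most C_Ω/τ for some constant C_Ω depending only on Ω, c, and |p - q| (not on τ), for all τ ≥ 1. -/

import Mathlib

open MeasureTheory

lemma exp_neg_abs_integrable' : Integrable (fun t : ℝ => Real.exp (-|t|)) := by
  have int_Ioi : IntegrableOn (fun t : ℝ => Real.exp (-|t|)) (Set.Ioi 0) := by
    refine (exp_neg_integrableOn_Ioi 0 (one_pos)).congr_fun ?_ measurableSet_Ioi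
    intro x hx
    simp [abs_of_pos (show (0:ℝ) < x from hx)]
  have int_Iic : IntegrableOn (fun t : ℝ => Real.exp (-|t|)) (Set.Iic 0) := by
    rw [← Measure.map_neg_eq_self (volume : Measure ℝ)]
    have m : MeasurableEmbedding fun x : ℝ => -x := (Homeomorph.neg ℝ).measurableEmbedding
    rw [m.integrableOn_map_iff]
    simp_rw [Function.comp_def, abs_neg, Set.neg_preimage, Set.neg_Iic, neg_zero]
    exact Iff.mpr integrableOn_Ici_iff_integrableOn_Ioi int_Ioi
  rw [← integrableOn_univ, ← Set.Iic_union_Ioi (a := (0:ℝ))]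
  exact int_Iic.union int_Ioi

lemma exp_abs_affine_integrable {A m : ℝ} (γ : ℝ) (hA : 0 < A) (hm : 0 < m) :
    Integrable (fun t : ℝ => Real.exp (-(A * |m * t + γ|))) := by
  have h1 : Integrable (fun s : ℝ => Real.exp (-(A * |s|))) := by
    have h := exp_neg_abs_integrable'.comp_mul_left' (R := A) hA.ne'
    have he : (fun x : ℝ => Real.exp (-|A * x|)) = fun s : ℝ => Real.exp (-(A * |s|)) := by
      funext x; rw [abs_mul, abs_of_pos hA]
    rwa [he] at h
  have h2 : Integrable (fun s : ℝ => Real.exp (-(A * |s + γ|))) := by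
    have emb : MeasurableEmbedding (fun x : ℝ => x + γ) :=
      (Homeomorph.addRight γ).measurableEmbedding
    exact ((measurePreserving_add_right volume γ).integrable_comp_emb emb).mpr h1
  exact h2.comp_mul_left' (R := m) hm.ne'

lemma exp_abs_affine_integral {A m : ℝ} (γ : ℝ) (hA : 0 < A) (hm : 0 < m) :
    ∫ t : ℝ, Real.exp (-(A * |m * t + γ|)) = 2 / (A * m) := by
  have base : ∫ u : ℝ, Real.exp (-|u|) = 2 := by
    rw [integral_comp_abs (f := fun x => Real.exp (-x)), integral_exp_neg_Ioi_zero, mul_one]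
  have h1 : ∫ s : ℝ, Real.exp (-(A * |s|)) = 2 / A := by
    have he : (fun s : ℝ => Real.exp (-(A * |s|))) = fun s : ℝ => Real.exp (-|A * s|) := by
      funext s; rw [abs_mul, abs_of_pos hA]
    have h := MeasureTheory.Measure.integral_comp_mul_left (fun u : ℝ => Real.exp (-|u|)) A
    rw [he, h, base, abs_of_pos (inv_pos.mpr hA), smul_eq_mul]
    ring
  have h2 : ∫ s : ℝ, Real.exp (-(A * |s + γ|)) = 2 / A := by
    have h := integral_add_right_eq_self (μ := volume)
      (fun u : ℝ => Real.exp (-(A * |u|))) γ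
    rw [h, h1]
  have h3 := MeasureTheory.Measure.integral_comp_mul_left
    (fun s : ℝ => Real.exp (-(A * |s + γ|))) m
  rw [h3, h2, abs_of_pos (inv_pos.mpr hm), smul_eq_mul]
  field_simp

set_option maxHeartbeats 1000000 in
theorem affine_exponential_slice_bound (d : ℕ)
    (p q : EuclideanSpace ℝ (Fin d)) (α β : ℝ) (hpq : p ≠ q)
    (Ω : Set (EuclideanSpace ℝ (Fin d))) (hΩm : MeasurableSet Ω)
    (hΩb : Bornology.IsBounded Ω) (c : ℝ) (hc : 0 < c) :
    ∃ C > (0 : ℝ), ∀ τ ≥ (1 : ℝ),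
      (∫ x in Ω, Real.exp (-(c * τ * |(inner ℝ (p - q) x : ℝ) + (α - β)|)))
        ≤ C / τ := by
  classical
  set v : EuclideanSpace ℝ (Fin d) := p - q with hv_def
  have hv : v ≠ 0 := sub_ne_zero.mpr hpq
  have hvnorm : 0 < ‖v‖ := norm_pos_iff.mpr hv
  -- d is positive
  have hd : 0 < d := by
    rcases Nat.eq_zero_or_pos d with h0 | h
    · exfalso; apply hpq; subst h0; ext i; exact i.elim0
    · exact h
  set i0 : Fin d := ⟨0, hd⟩ with hi0_def
  -- orthonormal basis with first vector in direction v
  set n : EuclideanSpace ℝ (Fin d) := ‖v‖⁻¹ • v with hn_def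
  have hn : ‖n‖ = 1 := norm_smul_inv_norm hv
  have hONext : Orthonormal ℝ (({i0} : Set (Fin d)).restrict fun _ : Fin d => n) := by
    constructor
    · intro i; exact hn
    · intro i j hij
      exfalso
      apply hij
      ext
      have hi := i.2
      have hj := j.2
      simp only [Set.mem_singleton_iff] at hi hj
      rw [hi, hj]
  obtain ⟨b, hb⟩ := Orthonormal.exists_orthonormalBasis_extension_of_card_eq
    (𝕜 := ℝ) (by simp [finrank_euclideanSpace]) hONext
  have hbi0 : b i0 = n := hb i0 rfl
  -- key coordinate identity
  have hkey : ∀ x : EuclideanSpace ℝ (Fin d),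
      (inner ℝ v x : ℝ) = ‖v‖ * b.repr x i0 := by
    intro x
    rw [b.repr_apply_apply, hbi0, hn_def, real_inner_smul_left]
    field_simp
  -- bounding radius
  obtain ⟨r, hr⟩ := hΩb.subset_closedBall 0
  set R : ℝ := max r 1 with hR_def
  have hR1 : (1:ℝ) ≤ R := le_max_right _ _
  have hR0 : 0 < R := lt_of_lt_of_le one_pos hR1
  have hΩR : Ω ⊆ Metric.closedBall 0 R :=
    hr.trans (Metric.closedBall_subset_closedBall (le_max_left _ _))
  -- the constant
  refine ⟨(2 / (c * ‖v‖)) * (2 * R) ^ (d - 1), by positivity, ?_⟩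
  intro τ hτ
  have hτ0 : 0 < τ := lt_of_lt_of_le one_pos hτ
  have hA : 0 < c * τ := mul_pos hc hτ0
  set γ : ℝ := α - β with hγ_def
  -- the slice functions
  set g : Fin d → ℝ → ℝ := fun i t =>
    if i = i0 then Real.exp (-(c * τ * |‖v‖ * t + γ|))
    else Set.indicator (Set.Icc (-R) R) (fun _ => (1:ℝ)) t with hg_def
  have hgint : ∀ i, Integrable (g i) := by
    intro i
    by_cases hi : i = i0
    · simpa [hg_def, hi] using exp_abs_affine_integrable γ hA hvnorm
    · simp only [hg_def, hi, if_false]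
      exact (integrableOn_const measure_Icc_lt_top.ne).integrable_indicator
        measurableSet_Icc
  have hgnonneg : ∀ i t, 0 ≤ g i t := by
    intro i t
    by_cases hi : i = i0
    · simp [hg_def, hi, (Real.exp_pos _).le]
    · simp only [hg_def, hi, if_false]
      exact Set.indicator_nonneg (fun _ _ => zero_le_one) t
  set G : EuclideanSpace ℝ (Fin d) → ℝ := fun y => ∏ i, g i (y i) with hG_def
  have hGnonneg : ∀ y, 0 ≤ G y := fun y => Finset.prod_nonneg fun i _ => hgnonneg i (y i)
  -- integrability of G on the pi space and on euclidean space
  have hGint_pi : Integrable (fun y : Fin d → ℝ => ∏ i, g i (y i)) :=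
    Integrable.fintype_prod (𝕜 := ℝ) hgint
  have hGint : Integrable G := by
    have hmp := (EuclideanSpace.volume_preserving_symm_measurableEquiv_toLp (Fin d)).symm
    rw [← hmp.integrable_comp_emb (MeasurableEquiv.measurableEmbedding _)]
    exact hGint_pi
  have hcomp : Integrable (fun x : EuclideanSpace ℝ (Fin d) => G (b.repr x)) :=
    (MeasureTheory.integrable_comp b.repr G).mpr hGint
  -- pointwise bound on Ω
  have hle : ∀ x ∈ Ω, Real.exp (-(c * τ * |(inner ℝ v x : ℝ) + γ|)) = G (b.repr x) := by
    intro x hx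
    have hxR : ‖x‖ ≤ R := by
      have := hΩR hx
      rwa [Metric.mem_closedBall, dist_zero_right] at this
    have hcoord : ∀ i : Fin d, |b.repr x i| ≤ R := by
      intro i
      have h1 : |b.repr x i| ≤ ‖b.repr x‖ := by
        rw [EuclideanSpace.norm_eq]
        calc |b.repr x i| = Real.sqrt (|b.repr x i| ^ 2) := by
              rw [Real.sqrt_sq_eq_abs, abs_abs]
          _ ≤ _ := by
              apply Real.sqrt_le_sqrt
              refine Finset.single_le_sum (f := fun j => ‖b.repr x j‖ ^ 2)
                (fun j _ => by positivity) (Finset.mem_univ i) |>.trans_eq' ?_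
              simp [Real.norm_eq_abs]
      have h2 : ‖b.repr x‖ = ‖x‖ := b.repr.norm_map x
      linarith
    show _ = ∏ i, g i (b.repr x i)
    rw [Finset.prod_eq_single i0 ?h1 ?h2]
    · simp only [hg_def, if_pos rfl]
      rw [hkey x]
    · intro i _ hi
      simp only [hg_def, if_neg hi]
      rw [Set.indicator_of_mem]
      constructor
      · linarith [abs_le.mp (hcoord i) |>.1]
      · exact (abs_le.mp (hcoord i)).2
    · intro h; exact absurd (Finset.mem_univ i0) h
  -- main computation
  have key : (∫ x in Ω, Real.exp (-(c * τ * |(inner ℝ v x : ℝ) + γ|)))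
      ≤ (2 / (c * τ * ‖v‖)) * (2 * R) ^ (d - 1) := by
    have hFcont : Continuous fun x : EuclideanSpace ℝ (Fin d) =>
        Real.exp (-(c * τ * |(inner ℝ v x : ℝ) + γ|)) := by
      apply Real.continuous_exp.comp
      apply Continuous.neg
      apply Continuous.mul continuous_const
      exact ((continuous_const.inner continuous_id).add continuous_const).abs
    have hFint : IntegrableOn (fun x : EuclideanSpace ℝ (Fin d) =>
        Real.exp (-(c * τ * |(inner ℝ v x : ℝ) + γ|))) Ω := by
      exact (hFcont.continuousOn.integrableOn_compact
        (isCompact_closedBall 0 R)).mono_set hΩR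
    calc (∫ x in Ω, Real.exp (-(c * τ * |(inner ℝ v x : ℝ) + γ|)))
        ≤ ∫ x in Ω, G (b.repr x) :=
          setIntegral_mono_on hFint hcomp.integrableOn hΩm
            (fun x hx => le_of_eq (hle x hx))
      _ ≤ ∫ x, G (b.repr x) :=
          setIntegral_le_integral hcomp (Filter.Eventually.of_forall fun x => hGnonneg _)
      _ = ∫ y, G y := MeasureTheory.integral_comp b.repr G
      _ = ∫ y : Fin d → ℝ, ∏ i, g i (y i) := by
          have hmp2 : MeasurePreserving (⇑(MeasurableEquiv.toLp 2 (Fin d → ℝ)))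
              volume volume :=
            (EuclideanSpace.volume_preserving_symm_measurableEquiv_toLp (Fin d)).symm
          rw [← hmp2.integral_comp' G]
          rfl
      _ = ∏ i, ∫ t, g i t := integral_fintype_prod_eq_prod g
      _ = (2 / (c * τ * ‖v‖)) * (2 * R) ^ (d - 1) := by
          rw [Finset.prod_eq_mul_prod_sdiff_singleton_of_mem (Finset.mem_univ i0) (fun i => ∫ t, g i t)]
          have e0 : ∫ t, g i0 t = 2 / (c * τ * ‖v‖) := by
            simp only [hg_def, if_pos rfl]
            exact exp_abs_affine_integral γ hA hvnorm
          have e1 : ∀ i ∈ Finset.univ \ {i0}, ∫ t, g i t = 2 * R := by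
            intro i hi
            have hi' : i ≠ i0 := by
              simpa [Finset.mem_sdiff] using hi
            simp only [hg_def, if_neg hi']
            rw [MeasureTheory.integral_indicator_const (1:ℝ) measurableSet_Icc,
              measureReal_def, Real.volume_Icc, smul_eq_mul, mul_one, show R - -R = 2 * R by ring]
            exact ENNReal.toReal_ofReal (by linarith)
          rw [e0, Finset.prod_congr rfl e1, Finset.prod_const]
          congr 1
          rw [Finset.card_sdiff_of_subset (by simp), Finset.card_univ, Fintype.card_fin,
            Finset.card_singleton]
  calc (∫ x in Ω, Real.exp (-(c * τ * |(inner ℝ (p - q) x : ℝ) + (α - β)|)))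
      ≤ (2 / (c * τ * ‖v‖)) * (2 * R) ^ (d - 1) := key
    _ = (2 / (c * ‖v‖)) * (2 * R) ^ (d - 1) / τ := by
        field_simp
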